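/- Let Q : ℝ² → (0,∞) be radial and strictly decreasing in |x| with ∫|x|^p Q(x)² dx < ∞ for some p > 0. Then for every y ∈ ℝ², ∫_{ℝ²} |x + y|^p Q(x)² dx ≥ ∫_{ℝ²} |x|^p Q(x)² dx, with equality if and only if y = 0. -/

import Mathlib

open MeasureTheory Real Filter Metric

noncomputable section

abbrev E2 : Type := EuclideanSpace ℝ (Fin 2)

/-- squared norm of the gradient -/
def gradSq (u : E2 → ℝ) (x : E2) : ℝ := ‖fderiv ℝ u x‖ ^ 2

/-- the Laplacian as the sum of second partial derivatives -/
def lap (u : E2 → ℝ) (x : E2) : ℝ :=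
  ∑ i : Fin 2, fderiv ℝ (fun y => fderiv ℝ u y (EuclideanSpace.single i 1)) x
      (EuclideanSpace.single i 1)

/-- membership in H¹(ℝ²) together with L⁴ (which follows by Sobolev embedding) -/
def IsH1 (u : E2 → ℝ) : Prop :=
  Differentiable ℝ u ∧ Integrable (fun x => u x ^ 2) ∧
    Integrable (gradSq u) ∧ Integrable (fun x => u x ^ 4)

/-- `Q` is the (unique) positive radial H¹ solution of `-ΔQ + Q - Q³ = 0` in ℝ² -/
def IsGroundState (Q : E2 → ℝ) : Prop :=
  ContDiff ℝ 2 Q ∧ (∀ x, 0 < Q x) ∧ (∀ x y : E2, ‖x‖ = ‖y‖ → Q x = Q y) ∧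
    IsH1 Q ∧ ∀ x, -lap Q x + Q x - Q x ^ 3 = 0

/-- the space 𝓗 : H¹ functions with finite potential energy -/
def InH (V : E2 → ℝ) (u : E2 → ℝ) : Prop :=
  IsH1 u ∧ Integrable (fun x => V x * u x ^ 2)

/-- the Gross–Pitaevskii functional -/
def Ea (V : E2 → ℝ) (a : ℝ) (u : E2 → ℝ) : ℝ :=
  (∫ x, gradSq u x) + (∫ x, V x * u x ^ 2) - a / 2 * (∫ x, u x ^ 4)

/-- a minimizer of the GP functional on the unit L² sphere of 𝓗 -/
def IsMinimizer (V : E2 → ℝ) (a : ℝ) (u : E2 → ℝ) : Prop :=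
  InH V u ∧ (∫ x, u x ^ 2) = 1 ∧
    ∀ v, InH V v → (∫ x, v x ^ 2) = 1 → Ea V a u ≤ Ea V a v

/-- the GP ground-state energy, with values in ℝ ∪ {±∞} -/
def gpE (V : E2 → ℝ) (a : ℝ) : EReal :=
  sInf {y : EReal | ∃ u, InH V u ∧ (∫ x, u x ^ 2) = 1 ∧ y = (Ea V a u : EReal)}
namespace Stmt19Aux

def e1 : E2 := EuclideanSpace.single 0 1

lemma norm_e1 : ‖e1‖ = 1 := by simp [e1, EuclideanSpace.norm_single]

lemma norm_smul_e1 {r : ℝ} (hr : 0 ≤ r) : ‖r • e1‖ = r := by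
  rw [norm_smul, norm_e1, Real.norm_eq_abs, abs_of_nonneg hr, mul_one]

variable {Q : E2 → ℝ}

lemma ball_compare (hpos : ∀ x, 0 < Q x)
    (hrad : ∀ x y : E2, ‖x‖ = ‖y‖ → Q x = Q y)
    (hdec : ∀ x y : E2, ‖x‖ < ‖y‖ → Q y < Q x)
    (hQm : Measurable Q) (c : E2) (r : ℝ) (hr : 0 < r) :
    (volume.withDensity fun x => ENNReal.ofReal (Q x ^ 2)) (closedBall c r)
      ≤ (volume.withDensity fun x => ENNReal.ofReal (Q x ^ 2)) (closedBall 0 r) ∧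
    (c ≠ 0 → (volume.withDensity fun x => ENNReal.ofReal (Q x ^ 2)) (closedBall c r)
      < (volume.withDensity fun x => ENNReal.ofReal (Q x ^ 2)) (closedBall 0 r)) := by
  set ν := volume.withDensity fun x => ENNReal.ofReal (Q x ^ 2) with hνdef
  have hν : ∀ S : Set E2, MeasurableSet S → ν S = ∫⁻ x in S, ENNReal.ofReal (Q x ^ 2) := by
    intro S hS; rw [hνdef, withDensity_apply _ hS]
  set m : ℝ := Q (r • e1) ^ 2 with hm
  -- upper bound on sets outside the ball
  have hub : ∀ S : Set E2, MeasurableSet S → (∀ x ∈ S, r < ‖x‖) →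
      ν S ≤ ENNReal.ofReal m * volume S := by
    intro S hS hSsub
    rw [hν S hS, ← setLIntegral_const S (ENNReal.ofReal m)]
    refine setLIntegral_mono measurable_const fun x hx => ?_
    refine ENNReal.ofReal_le_ofReal ?_
    have hn : ‖r • e1‖ < ‖x‖ := by rw [norm_smul_e1 hr.le]; exact hSsub x hx
    exact pow_le_pow_left₀ (hpos x).le (hdec (r • e1) x hn).le 2
  -- lower bound on subsets of the ball, with a general constant
  have hlb : ∀ (ρ : ℝ), 0 ≤ ρ → ∀ S : Set E2, MeasurableSet S → (∀ x ∈ S, Q x ^ 2 ≥ ρ) →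
      ENNReal.ofReal ρ * volume S ≤ ν S := by
    intro ρ hρ S hS hSsub
    rw [hν S hS, ← setLIntegral_const S (ENNReal.ofReal ρ)]
    exact setLIntegral_mono (hQm.pow_const 2).ennreal_ofReal fun x hx =>
      ENNReal.ofReal_le_ofReal (hSsub x hx)
  have hmQ : ∀ x ∈ closedBall (0:E2) r, Q x ^ 2 ≥ m := by
    intro x hx
    rw [mem_closedBall, dist_zero_right] at hx
    rcases lt_or_eq_of_le hx with h | h
    · have hn : ‖x‖ < ‖r • e1‖ := by rw [norm_smul_e1 hr.le]; exact h
      exact pow_le_pow_left₀ (hpos _).le (hdec x (r • e1) hn).le 2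
    · rw [hm, hrad x (r • e1) (by rw [norm_smul_e1 hr.le]; exact h)]
  have hm_nonneg : 0 ≤ m := sq_nonneg _
  set B0 := closedBall (0:E2) r with hB0
  set Bc := closedBall c r with hBc
  have hB0m : MeasurableSet B0 := measurableSet_closedBall
  have hBcm : MeasurableSet Bc := measurableSet_closedBall
  -- equality of volumes of the two differences
  have hvol_eq : volume Bc = volume B0 := by
    have : Bc = (fun x => x + (-c)) ⁻¹' B0 := by
      ext x; simp [hBc, hB0, mem_closedBall, dist_eq_norm]
    rw [this, measure_preimage_add_right]
  have hfin : volume B0 ≠ ⊤ := measure_closedBall_lt_top.ne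
  have hvol_diff : volume (Bc \ B0) = volume (B0 \ Bc) := by
    have h1 : volume (Bc ∩ B0) + volume (Bc \ B0) = volume Bc :=
      measure_inter_add_diff Bc hB0m
    have h2 : volume (B0 ∩ Bc) + volume (B0 \ Bc) = volume B0 :=
      measure_inter_add_diff B0 hBcm
    rw [Set.inter_comm] at h2
    have hint_fin : volume (Bc ∩ B0) ≠ ⊤ :=
      (lt_of_le_of_lt (measure_mono Set.inter_subset_right) measure_closedBall_lt_top).ne
    rw [← hvol_eq, ← h1] at h2
    exact (ENNReal.add_right_inj hint_fin).mp h2.symm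
  have hsplit1 : ν (Bc ∩ B0) + ν (Bc \ B0) = ν Bc := measure_inter_add_diff Bc hB0m
  have hsplit2 : ν (Bc ∩ B0) + ν (B0 \ Bc) = ν B0 := by
    rw [Set.inter_comm]; exact measure_inter_add_diff B0 hBcm
  have hdsub : ∀ x ∈ Bc \ B0, r < ‖x‖ := by
    intro x hx
    have := hx.2
    simp only [hB0, mem_closedBall, dist_zero_right, not_le] at this
    exact this
  have hkey : ν (Bc \ B0) ≤ ν (B0 \ Bc) := by
    calc ν (Bc \ B0) ≤ ENNReal.ofReal m * volume (Bc \ B0) :=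
          hub _ (hBcm.diff hB0m) hdsub
      _ = ENNReal.ofReal m * volume (B0 \ Bc) := by rw [hvol_diff]
      _ ≤ ν (B0 \ Bc) := hlb m hm_nonneg _ (hB0m.diff hBcm)
          (fun x hx => hmQ x hx.1)
  have hle : ν Bc ≤ ν B0 := by
    rw [← hsplit1, ← hsplit2]
    exact add_le_add le_rfl hkey
  refine ⟨hle, fun hc => ?_⟩
  -- strict part
  have hcn : 0 < ‖c‖ := norm_pos_iff.mpr hc
  set t : ℝ := r - min r ‖c‖ / 2 with ht
  have htmin : 0 < min r ‖c‖ := lt_min hr hcn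
  have ht0 : 0 ≤ t := by
    rw [ht]; have : min r ‖c‖ / 2 ≤ r / 2 := by
      have := min_le_left r ‖c‖; linarith
    linarith
  have htr : t < r := by rw [ht]; linarith
  have htc : r < t + ‖c‖ := by
    rw [ht]; have := min_le_right r ‖c‖; linarith
  set s' : ℝ := (t + r) / 2 with hs'
  have hts' : t < s' := by rw [hs']; linarith
  have hs'r : s' < r := by rw [hs']; linarith
  have hs'0 : 0 ≤ s' := by linarith
  set x₀ : E2 := (t / ‖c‖) • (-c) with hx₀
  have hx₀norm : ‖x₀‖ = t := by
    rw [hx₀, norm_smul, norm_neg, Real.norm_eq_abs,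
      abs_of_nonneg (div_nonneg ht0 hcn.le), div_mul_cancel₀ _ hcn.ne']
  have hx₀c : ‖x₀ - c‖ = t + ‖c‖ := by
    have : x₀ - c = -((t / ‖c‖ + 1) • c) := by
      rw [hx₀, add_smul, one_smul, smul_neg]; abel
    rw [this, norm_neg, norm_smul, Real.norm_eq_abs,
      abs_of_nonneg (by positivity), add_mul, one_mul, div_mul_cancel₀ _ hcn.ne']
  set U : Set E2 := ball (0:E2) s' ∩ {x | r < ‖x - c‖} with hU
  have hUopen : IsOpen U :=
    isOpen_ball.inter (isOpen_lt continuous_const (continuous_id.sub continuous_const).norm)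
  have hx₀U : x₀ ∈ U := by
    constructor
    · rw [mem_ball, dist_zero_right, hx₀norm]; exact lt_of_lt_of_le hts' (le_refl s')
    · rw [Set.mem_setOf_eq, hx₀c]; exact htc
  have hUpos : 0 < volume U := hUopen.measure_pos volume ⟨x₀, hx₀U⟩
  have hUm : MeasurableSet U := hUopen.measurableSet
  have hUsub : U ⊆ B0 \ Bc := by
    rintro x ⟨hx1, hx2⟩
    rw [mem_ball, dist_zero_right] at hx1
    rw [Set.mem_setOf_eq] at hx2
    constructor
    · rw [hB0, mem_closedBall, dist_zero_right]; linarith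
    · rw [hBc, mem_closedBall, dist_eq_norm]; push_neg; exact hx2
  set m₂ : ℝ := Q (s' • e1) ^ 2 with hm₂
  have hmm₂ : m < m₂ := by
    have : Q (r • e1) < Q (s' • e1) := hdec _ _ (by rw [norm_smul_e1 hs'0, norm_smul_e1 hr.le]; exact hs'r)
    exact pow_lt_pow_left₀ this (hpos _).le (by norm_num)
  have hUQ : ∀ x ∈ U, Q x ^ 2 ≥ m₂ := by
    intro x hx
    have hx1 : ‖x‖ < s' := by
      have := hx.1; rwa [mem_ball, dist_zero_right] at this
    have hn : ‖x‖ < ‖s' • e1‖ := by rw [norm_smul_e1 hs'0]; exact hx1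
    exact pow_le_pow_left₀ (hpos _).le (hdec x (s' • e1) hn).le 2
  -- strict bound on the difference set
  have hstrict : ENNReal.ofReal m * volume (B0 \ Bc) < ν (B0 \ Bc) := by
    have hinterU : (B0 \ Bc) ∩ U = U := Set.inter_eq_self_of_subset_right hUsub
    have hsplitU : volume U + volume ((B0 \ Bc) \ U) = volume (B0 \ Bc) := by
      have := measure_inter_add_diff (μ := volume) (B0 \ Bc) hUm
      rwa [hinterU] at this
    have hsplitUν : ν U + ν ((B0 \ Bc) \ U) = ν (B0 \ Bc) := by
      have := measure_inter_add_diff (μ := ν) (B0 \ Bc) hUm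
      rwa [hinterU] at this
    have hUfin : volume U ≠ ⊤ :=
      (lt_of_le_of_lt (measure_mono (fun x hx => (hUsub hx).1)) measure_closedBall_lt_top).ne
    have hrestfin : ENNReal.ofReal m * volume ((B0 \ Bc) \ U) ≠ ⊤ := by
      refine ENNReal.mul_ne_top ENNReal.ofReal_ne_top ?_
      exact (lt_of_le_of_lt (measure_mono (fun x hx => hx.1.1)) measure_closedBall_lt_top).ne
    calc ENNReal.ofReal m * volume (B0 \ Bc)
        = ENNReal.ofReal m * volume U + ENNReal.ofReal m * volume ((B0 \ Bc) \ U) := by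
          rw [← hsplitU, mul_add]
      _ < ENNReal.ofReal m₂ * volume U + ENNReal.ofReal m * volume ((B0 \ Bc) \ U) := by
          refine ENNReal.add_lt_add_right hrestfin ?_
          exact ENNReal.mul_lt_mul_left hUpos.ne' hUfin
            (ENNReal.ofReal_lt_ofReal_iff_of_nonneg hm_nonneg |>.mpr hmm₂)
      _ ≤ ν U + ν ((B0 \ Bc) \ U) := by
          refine add_le_add ?_ ?_
          · exact hlb m₂ (sq_nonneg _) U hUm hUQ
          · exact hlb m hm_nonneg _ ((hB0m.diff hBcm).diff hUm)
              (fun x hx => hmQ x hx.1.1)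
      _ = ν (B0 \ Bc) := hsplitUν
  have hkey2 : ν (Bc \ B0) < ν (B0 \ Bc) :=
    lt_of_le_of_lt (le_trans (hub _ (hBcm.diff hB0m) hdsub) (le_of_eq (by rw [hvol_diff]))) hstrict
  rw [← hsplit1, ← hsplit2]
  refine ENNReal.add_lt_add_left ?_ hkey2
  -- ν (Bc ∩ B0) ≠ ⊤
  have hband : ∀ x : E2, Q x ^ 2 ≤ Q 0 ^ 2 := by
    intro x
    rcases eq_or_lt_of_le (norm_nonneg x) with h | h
    · rw [show x = 0 from norm_eq_zero.mp h.symm]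
    · exact pow_le_pow_left₀ (hpos x).le (hdec 0 x (by simpa using h)).le 2
  have : ν (Bc ∩ B0) ≤ ENNReal.ofReal (Q 0 ^ 2) * volume (Bc ∩ B0) :=
    (hν _ (hBcm.inter hB0m)) ▸ (le_trans (setLIntegral_mono measurable_const
      (fun x _ => ENNReal.ofReal_le_ofReal (hband x)))
      (le_of_eq (setLIntegral_const _ _)))
  refine (lt_of_le_of_lt this ?_).ne
  exact ENNReal.mul_lt_top ENNReal.ofReal_lt_top
    (lt_of_le_of_lt (measure_mono Set.inter_subset_right) measure_closedBall_lt_top)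

lemma measQ (hrad : ∀ x y : E2, ‖x‖ = ‖y‖ → Q x = Q y)
    (hdec : ∀ x y : E2, ‖x‖ < ‖y‖ → Q y < Q x) : Measurable Q := by
  set G : ℝ → ℝ := fun t => Q ((max t 0) • e1) with hG
  have hGanti : Antitone G := by
    intro s t hst
    rcases eq_or_lt_of_le (max_le_max_right (0:ℝ) hst) with h | h
    · simp [hG, h]
    · exact le_of_lt (hdec _ _ (by rw [norm_smul_e1 (le_max_right _ _), norm_smul_e1 (le_max_right _ _)]; exact h))
  have hQG : Q = fun x => G ‖x‖ := by
    funext x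
    have : max ‖x‖ 0 = ‖x‖ := max_eq_left (norm_nonneg x)
    simp only [hG, this]
    exact hrad x _ (by rw [norm_smul_e1 (norm_nonneg x)])
  rw [hQG]
  exact hGanti.measurable.comp measurable_norm


end Stmt19Aux

open Stmt19Aux

theorem stmt19 (Q : E2 → ℝ) (p : ℝ) (hp : 0 < p)
    (hpos : ∀ x, 0 < Q x)
    (hrad : ∀ x y : E2, ‖x‖ = ‖y‖ → Q x = Q y)
    (hdec : ∀ x y : E2, ‖x‖ < ‖y‖ → Q y < Q x)
    (hint : Integrable (fun x : E2 => ‖x‖ ^ p * Q x ^ 2)) (y : E2) :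
    (∫ x : E2, ‖x‖ ^ p * Q x ^ 2) ≤ (∫ x : E2, ‖x + y‖ ^ p * Q x ^ 2) ∧
    ((∫ x : E2, ‖x + y‖ ^ p * Q x ^ 2) = (∫ x : E2, ‖x‖ ^ p * Q x ^ 2) ↔ y = 0) := by
  have hQm : Measurable Q := measQ hrad hdec
  have hQ2m : Measurable fun x : E2 => Q x ^ 2 := hQm.pow_const 2
  have hg1c : Continuous fun x : E2 => ‖x‖ ^ p :=
    continuous_norm.rpow_const fun x => Or.inr hp.le
  have hg2c : Continuous fun x : E2 => ‖x + y‖ ^ p :=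
    ((continuous_id.add continuous_const).norm).rpow_const fun x => Or.inr hp.le
  -- integrability of Q^2
  have hband : ∀ x : E2, Q x ^ 2 ≤ Q 0 ^ 2 := by
    intro x
    rcases eq_or_lt_of_le (norm_nonneg x) with h | h
    · rw [show x = 0 from norm_eq_zero.mp h.symm]
    · exact pow_le_pow_left₀ (hpos x).le (hdec 0 x (by simpa using h)).le 2
  have hQ2i : Integrable (fun x : E2 => Q x ^ 2) := by
    rw [← integrableOn_univ, ← Set.union_compl_self (closedBall (0:E2) 1)]
    refine IntegrableOn.union ?_ ?_
    · refine Measure.integrableOn_of_bounded measure_closedBall_lt_top.ne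
        hQ2m.aestronglyMeasurable (M := Q 0 ^ 2) ?_
      exact Eventually.of_forall fun x => by
        rw [Real.norm_eq_abs, abs_of_nonneg (sq_nonneg _)]; exact hband x
    · refine Integrable.mono (hint.integrableOn) hQ2m.aestronglyMeasurable.restrict ?_
      refine (ae_restrict_iff' measurableSet_closedBall.compl).mpr
        (Eventually.of_forall fun x hx => ?_)
      simp only [Set.mem_compl_iff, mem_closedBall, dist_zero_right, not_le] at hx
      have h1 : 1 ≤ ‖x‖ := hx.le
      rw [Real.norm_eq_abs, abs_of_nonneg (sq_nonneg _), Real.norm_eq_abs,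
        abs_of_nonneg (by positivity)]
      nlinarith [Real.one_le_rpow h1 hp.le, sq_nonneg (Q x),
        Real.rpow_nonneg (norm_nonneg x) p]
  -- integrability of the shifted integrand
  have hBi : Integrable (fun x : E2 => ‖x + y‖ ^ p * Q x ^ 2) := by
    have hmono : ∀ x : E2, ‖x + y‖ ^ p ≤ 2 ^ p * (‖x‖ ^ p + ‖y‖ ^ p) := by
      intro x
      have h1 : ‖x + y‖ ≤ 2 * max ‖x‖ ‖y‖ := by
        calc ‖x + y‖ ≤ ‖x‖ + ‖y‖ := norm_add_le x y
          _ ≤ 2 * max ‖x‖ ‖y‖ := by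
            rw [two_mul]; exact add_le_add (le_max_left _ _) (le_max_right _ _)
      calc ‖x + y‖ ^ p ≤ (2 * max ‖x‖ ‖y‖) ^ p :=
            Real.rpow_le_rpow (norm_nonneg _) h1 hp.le
        _ = 2 ^ p * (max ‖x‖ ‖y‖) ^ p := Real.mul_rpow (by norm_num) (le_max_of_le_left (norm_nonneg _))
        _ ≤ 2 ^ p * (‖x‖ ^ p + ‖y‖ ^ p) := by
            refine mul_le_mul_of_nonneg_left ?_ (Real.rpow_nonneg (by norm_num) p)
            rcases max_cases ‖x‖ ‖y‖ with ⟨h, _⟩ | ⟨h, _⟩ <;> rw [h] <;>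
              [exact le_add_of_nonneg_right (Real.rpow_nonneg (norm_nonneg _) p);
              exact le_add_of_nonneg_left (Real.rpow_nonneg (norm_nonneg _) p)]
    have hdomi : Integrable (fun x : E2 =>
        2 ^ p * (‖x‖ ^ p * Q x ^ 2 + ‖y‖ ^ p * Q x ^ 2)) :=
      (hint.add (hQ2i.const_mul _)).const_mul _
    refine hdomi.mono ((hg2c.measurable.mul hQ2m).aestronglyMeasurable)
      (Eventually.of_forall fun x => ?_)
    rw [Real.norm_eq_abs, abs_of_nonneg (by positivity), Real.norm_eq_abs,
      abs_of_nonneg (by positivity)]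
    calc ‖x + y‖ ^ p * Q x ^ 2 ≤ (2 ^ p * (‖x‖ ^ p + ‖y‖ ^ p)) * Q x ^ 2 :=
          mul_le_mul_of_nonneg_right (hmono x) (sq_nonneg _)
      _ = 2 ^ p * (‖x‖ ^ p * Q x ^ 2 + ‖y‖ ^ p * Q x ^ 2) := by ring
  -- the weighted measure
  set ν := volume.withDensity fun x : E2 => ENNReal.ofReal (Q x ^ 2) with hνdef
  have hνuniv : ν Set.univ ≠ ⊤ := by
    rw [hνdef, withDensity_apply _ MeasurableSet.univ, Measure.restrict_univ]
    exact ((lintegral_ofReal_le_lintegral_enorm _).trans_lt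
      hQ2i.hasFiniteIntegral).ne
  have hνfins : ∀ s : Set E2, ν s ≠ ⊤ := fun s =>
    ((measure_mono (Set.subset_univ s)).trans_lt (lt_top_iff_ne_top.mpr hνuniv)).ne
  -- layer cake
  have hwd : ∀ g : E2 → ℝ, Measurable g → (∀ x, 0 ≤ g x) →
      (∫⁻ x : E2, ENNReal.ofReal (g x * Q x ^ 2)) =
        ∫⁻ t in Set.Ioi (0:ℝ), ν {x : E2 | t < g x} := by
    intro g hg hg0
    have h1 : (∫⁻ x : E2, ENNReal.ofReal (g x * Q x ^ 2) ∂volume)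
        = ∫⁻ x : E2, ENNReal.ofReal (g x) ∂ν := by
      rw [hνdef, lintegral_withDensity_eq_lintegral_mul volume hQ2m.ennreal_ofReal
        hg.ennreal_ofReal]
      refine lintegral_congr fun x => ?_
      simp only [Pi.mul_apply]
      rw [← ENNReal.ofReal_mul (sq_nonneg _), mul_comm]
    rw [h1, lintegral_eq_lintegral_meas_lt ν (Eventually.of_forall hg0) hg.aemeasurable]
  set LA := ∫⁻ x : E2, ENNReal.ofReal (‖x‖ ^ p * Q x ^ 2) with hLAdef
  set LB := ∫⁻ x : E2, ENNReal.ofReal (‖x + y‖ ^ p * Q x ^ 2) with hLBdef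
  have hLA_fin : LA ≠ ⊤ :=
    ((lintegral_ofReal_le_lintegral_enorm _).trans_lt hint.hasFiniteIntegral).ne
  have hLB_fin : LB ≠ ⊤ :=
    ((lintegral_ofReal_le_lintegral_enorm _).trans_lt hBi.hasFiniteIntegral).ne
  -- sets as complements of closed balls
  have hset1 : ∀ t : ℝ, 0 < t →
      {x : E2 | t < ‖x‖ ^ p} = (closedBall (0:E2) (t ^ p⁻¹))ᶜ := by
    intro t ht
    ext x
    simp only [Set.mem_setOf_eq, Set.mem_compl_iff, mem_closedBall, dist_zero_right, not_le]
    exact (Real.rpow_inv_lt_iff_of_pos ht.le (norm_nonneg _) hp).symm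
  have hset2 : ∀ t : ℝ, 0 < t →
      {x : E2 | t < ‖x + y‖ ^ p} = (closedBall (-y) (t ^ p⁻¹))ᶜ := by
    intro t ht
    ext x
    simp only [Set.mem_setOf_eq, Set.mem_compl_iff, mem_closedBall, dist_eq_norm,
      sub_neg_eq_add, not_le]
    exact (Real.rpow_inv_lt_iff_of_pos ht.le (norm_nonneg _) hp).symm
  -- pointwise comparison of the layer measures
  have hcomp : ∀ t : ℝ, t ∈ Set.Ioi (0:ℝ) →
      ν {x : E2 | t < ‖x‖ ^ p} ≤ ν {x : E2 | t < ‖x + y‖ ^ p} := by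
    intro t ht
    rw [Set.mem_Ioi] at ht
    rw [hset1 t ht, hset2 t ht,
      measure_compl measurableSet_closedBall (hνfins _),
      measure_compl measurableSet_closedBall (hνfins _)]
    exact tsub_le_tsub_left
      ((ball_compare hpos hrad hdec hQm (-y) (t ^ p⁻¹) (Real.rpow_pos_of_pos ht p⁻¹)).1) _
  have hcomp_strict : y ≠ 0 → ∀ t : ℝ, t ∈ Set.Ioi (0:ℝ) →
      ν {x : E2 | t < ‖x‖ ^ p} < ν {x : E2 | t < ‖x + y‖ ^ p} := by
    intro hy t ht
    rw [Set.mem_Ioi] at ht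
    rw [hset1 t ht, hset2 t ht,
      measure_compl measurableSet_closedBall (hνfins _),
      measure_compl measurableSet_closedBall (hνfins _)]
    have hstr := (ball_compare hpos hrad hdec hQm (-y) (t ^ p⁻¹)
      (Real.rpow_pos_of_pos ht p⁻¹)).2 (neg_ne_zero.mpr hy)
    refine ((ENNReal.cancel_of_ne hνuniv).tsub_lt_tsub_iff_left_of_le
      (ENNReal.cancel_of_ne (hνfins _))
      (measure_mono (Set.subset_univ _))).mpr hstr
  -- layer-cake representations
  have hLA : LA = ∫⁻ t in Set.Ioi (0:ℝ), ν {x : E2 | t < ‖x‖ ^ p} :=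
    hwd _ hg1c.measurable fun x => Real.rpow_nonneg (norm_nonneg _) p
  have hLB : LB = ∫⁻ t in Set.Ioi (0:ℝ), ν {x : E2 | t < ‖x + y‖ ^ p} :=
    hwd _ hg2c.measurable fun x => Real.rpow_nonneg (norm_nonneg _) p
  -- measurability of the right layer function (antitone)
  have hgm : Measurable fun t : ℝ => ν {x : E2 | t < ‖x + y‖ ^ p} :=
    Antitone.measurable fun s t hst =>
      measure_mono fun x hx => lt_of_le_of_lt hst hx
  have hle : LA ≤ LB := by
    rw [hLA, hLB]
    exact setLIntegral_mono hgm hcomp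
  have hlt : y ≠ 0 → LA < LB := by
    intro hy
    rw [hLA, hLB]
    refine lintegral_strict_mono ?_ hgm.aemeasurable (by rw [← hLA]; exact hLA_fin) ?_
    · rw [Ne, Measure.restrict_eq_zero]
      simp [Real.volume_Ioi]
    · exact (ae_restrict_iff' measurableSet_Ioi).mpr
        (Eventually.of_forall fun t ht => hcomp_strict hy t ht)
  -- conversion to Bochner integrals
  have hA : (∫ x : E2, ‖x‖ ^ p * Q x ^ 2) = LA.toReal := by
    rw [hLAdef, integral_eq_lintegral_of_nonneg_ae (f := fun x => ‖x‖ ^ p * Q x ^ 2)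
      (Eventually.of_forall fun x => by positivity)
      (hg1c.measurable.mul hQ2m).aestronglyMeasurable]
  have hB : (∫ x : E2, ‖x + y‖ ^ p * Q x ^ 2) = LB.toReal := by
    rw [hLBdef, integral_eq_lintegral_of_nonneg_ae (f := fun x => ‖x + y‖ ^ p * Q x ^ 2)
      (Eventually.of_forall fun x => by positivity)
      (hg2c.measurable.mul hQ2m).aestronglyMeasurable]
  constructor
  · rw [hA, hB]
    exact ENNReal.toReal_mono hLB_fin hle
  · constructor
    · intro h
      by_contra hy
      have := ENNReal.toReal_strict_mono hLB_fin (hlt hy)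
      rw [← hA, ← hB] at this
      exact absurd h this.ne'
    · rintro rfl
      simp
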